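/- Deterministic array product bound (Proposition 2): Let A be a real array indexed by tuples over {1,…,d} on index set S ⊆ {1,…,k} and B a real array on index set T ⊆ {1,…,k}, with S ∪ T = {1,…,k} and S ∩ T ≠ ∅. Say an array D on index set U is K-bounded if for every i ∈ U and every value j ∈ {1,…,d}, the sum of |D| over all indices in U∖{i} with index i fixed to j is at most K. If A is K_A-bounded and B is K_B-bounded, then the array C with entries C(j_1,…,j_k) = A(j_S) B(j_T) is (K_A K_B)-bounded. -/

import Mathlib

open Finset

/-- An array indexed by tuples over `Fin d` (with index set `α`) is `K`-bounded
if every one-index marginal absolute sum is at most `K`. -/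
def MarginBounded {α : Type*} [Fintype α] [DecidableEq α] (d : ℕ)
    (A : (α → Fin d) → ℝ) (K : ℝ) : Prop :=
  ∀ (i : α) (j : Fin d),
    ∑ f ∈ Finset.univ.filter (fun f : α → Fin d => f i = j), |A f| ≤ K

/-- Key injection bound: the sum of `|A|·|B|` over functions whose restrictions
satisfy predicates `p`, `q` is at most the product of the filtered sums. -/
lemma key_injection_bound
    (k d : ℕ) (S T : Finset (Fin k))
    (hST : S ∪ T = Finset.univ)
    (A : ({x // x ∈ S} → Fin d) → ℝ) (B : ({x // x ∈ T} → Fin d) → ℝ)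
    (p : ({x // x ∈ S} → Fin d) → Prop) (q : ({x // x ∈ T} → Fin d) → Prop)
    [DecidablePred p] [DecidablePred q] :
    ∑ f ∈ univ.filter (fun f : Fin k → Fin d =>
        p (fun x => f x.1) ∧ q (fun x => f x.1)),
      |A (fun x => f x.1)| * |B (fun x => f x.1)|
    ≤ (∑ g ∈ univ.filter p, |A g|) * (∑ h ∈ univ.filter q, |B h|) := by
  classical
  have hmem : ∀ x : Fin k, x ∈ S ∨ x ∈ T := by
    intro x
    have : x ∈ S ∪ T := hST ▸ mem_univ x
    simpa [mem_union] using this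
  set e : (Fin k → Fin d) → (({x // x ∈ S} → Fin d) × ({x // x ∈ T} → Fin d)) :=
    fun f => (fun x => f x.1, fun x => f x.1) with he
  have einj : Function.Injective e := by
    intro f f' hff
    funext x
    rcases hmem x with hx | hx
    · exact congrFun (congrArg Prod.fst hff) ⟨x, hx⟩
    · exact congrFun (congrArg Prod.snd hff) ⟨x, hx⟩
  set F := univ.filter (fun f : Fin k → Fin d =>
      p (fun x => f x.1) ∧ q (fun x => f x.1)) with hF
  have h1 : ∑ f ∈ F, |A (fun x => f x.1)| * |B (fun x => f x.1)|
      = ∑ gh ∈ F.image e, |A gh.1| * |B gh.2| := by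
    rw [Finset.sum_image (fun a _ b _ h => einj h)]
  have h2 : F.image e ⊆ (univ.filter p) ×ˢ (univ.filter q) := by
    intro gh hgh
    simp only [mem_image, hF, mem_filter, mem_univ, true_and] at hgh
    obtain ⟨f, ⟨hp, hq⟩, rfl⟩ := hgh
    exact mem_product.mpr ⟨mem_filter.mpr ⟨mem_univ _, hp⟩, mem_filter.mpr ⟨mem_univ _, hq⟩⟩
  calc ∑ f ∈ F, |A (fun x => f x.1)| * |B (fun x => f x.1)|
      = ∑ gh ∈ F.image e, |A gh.1| * |B gh.2| := h1
    _ ≤ ∑ gh ∈ (univ.filter p) ×ˢ (univ.filter q), |A gh.1| * |B gh.2| :=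
        Finset.sum_le_sum_of_subset_of_nonneg h2
          (fun _ _ _ => mul_nonneg (abs_nonneg _) (abs_nonneg _))
    _ = (∑ g ∈ univ.filter p, |A g|) * (∑ h ∈ univ.filter q, |B h|) := by
        rw [Finset.sum_mul_sum, Finset.sum_product]

/-- One-sided case: the fixed index `i` belongs to `S`. -/
lemma main_case
    (k d : ℕ) (S T : Finset (Fin k))
    (hST : S ∪ T = Finset.univ)
    (A : ({x // x ∈ S} → Fin d) → ℝ) (B : ({x // x ∈ T} → Fin d) → ℝ)
    (KA KB : ℝ)
    (hA : MarginBounded d A KA) (hB : MarginBounded d B KB)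
    (a : Fin k) (haS : a ∈ S) (haT : a ∈ T)
    (i : Fin k) (hiS : i ∈ S) (j : Fin d) (hKB0 : 0 ≤ KB) :
    ∑ f ∈ univ.filter (fun f : Fin k → Fin d => f i = j),
      |A (fun x => f x.1)| * |B (fun x => f x.1)| ≤ KA * KB := by
  classical
  have hsplit : ∑ f ∈ univ.filter (fun f : Fin k → Fin d => f i = j),
      |A (fun x => f x.1)| * |B (fun x => f x.1)|
      = ∑ j' : Fin d, ∑ f ∈ univ.filter (fun f : Fin k → Fin d =>
          (f i = j ∧ f a = j') ∧ f a = j'),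
          |A (fun x => f x.1)| * |B (fun x => f x.1)| := by
    rw [← Finset.sum_fiberwise (univ.filter (fun f : Fin k → Fin d => f i = j))
      (fun f => f a)]
    congr 1
    funext j'
    congr 1
    rw [Finset.filter_filter]
    apply Finset.filter_congr
    intro f _
    constructor
    · rintro ⟨h1, h2⟩; exact ⟨⟨h1, h2⟩, h2⟩
    · rintro ⟨⟨h1, h2⟩, _⟩; exact ⟨h1, h2⟩
  rw [hsplit]
  have step : ∀ j' : Fin d,
      ∑ f ∈ univ.filter (fun f : Fin k → Fin d =>
          (f i = j ∧ f a = j') ∧ f a = j'),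
          |A (fun x => f x.1)| * |B (fun x => f x.1)|
      ≤ (∑ g ∈ univ.filter (fun g : {x // x ∈ S} → Fin d =>
            g ⟨i, hiS⟩ = j ∧ g ⟨a, haS⟩ = j'), |A g|) * KB := by
    intro j'
    have := key_injection_bound k d S T hST A B
      (fun g => g ⟨i, hiS⟩ = j ∧ g ⟨a, haS⟩ = j')
      (fun h => h ⟨a, haT⟩ = j')
    refine le_trans (le_of_eq ?_) (le_trans this ?_)
    · rfl
    · exact mul_le_mul_of_nonneg_left (hB ⟨a, haT⟩ j')
        (Finset.sum_nonneg fun _ _ => abs_nonneg _)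
  calc ∑ j' : Fin d, ∑ f ∈ univ.filter (fun f : Fin k → Fin d =>
          (f i = j ∧ f a = j') ∧ f a = j'),
          |A (fun x => f x.1)| * |B (fun x => f x.1)|
      ≤ ∑ j' : Fin d, (∑ g ∈ univ.filter (fun g : {x // x ∈ S} → Fin d =>
            g ⟨i, hiS⟩ = j ∧ g ⟨a, haS⟩ = j'), |A g|) * KB :=
        Finset.sum_le_sum fun j' _ => step j'
    _ = (∑ j' : Fin d, ∑ g ∈ univ.filter (fun g : {x // x ∈ S} → Fin d =>
            g ⟨i, hiS⟩ = j ∧ g ⟨a, haS⟩ = j'), |A g|) * KB := by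
        rw [Finset.sum_mul]
    _ ≤ KA * KB := by
        apply mul_le_mul_of_nonneg_right _ hKB0
        have : ∑ j' : Fin d, ∑ g ∈ univ.filter (fun g : {x // x ∈ S} → Fin d =>
            g ⟨i, hiS⟩ = j ∧ g ⟨a, haS⟩ = j'), |A g|
            = ∑ g ∈ univ.filter (fun g : {x // x ∈ S} → Fin d =>
                g ⟨i, hiS⟩ = j), |A g| := by
          rw [← Finset.sum_fiberwise (univ.filter
            (fun g : {x // x ∈ S} → Fin d => g ⟨i, hiS⟩ = j)) (fun g => g ⟨a, haS⟩)]
          congr 1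
          funext j'
          rw [Finset.filter_filter]
        rw [this]
        exact hA ⟨i, hiS⟩ j

theorem array_product_margin_bounded
    (k d : ℕ) (S T : Finset (Fin k))
    (hST : S ∪ T = Finset.univ) (hint : (S ∩ T).Nonempty)
    (A : ({x // x ∈ S} → Fin d) → ℝ) (B : ({x // x ∈ T} → Fin d) → ℝ)
    (KA KB : ℝ)
    (hA : MarginBounded d A KA) (hB : MarginBounded d B KB) :
    MarginBounded d
      (fun f : Fin k → Fin d =>
        A (fun i => f i.1) * B (fun i => f i.1)) (KA * KB) := by
  intro i j
  obtain ⟨a, haST⟩ := hint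
  have haS : a ∈ S := (mem_inter.mp haST).1
  have haT : a ∈ T := (mem_inter.mp haST).2
  have hKA0 : 0 ≤ KA :=
    le_trans (Finset.sum_nonneg fun _ _ => abs_nonneg _) (hA ⟨a, haS⟩ j)
  have hKB0 : 0 ≤ KB :=
    le_trans (Finset.sum_nonneg fun _ _ => abs_nonneg _) (hB ⟨a, haT⟩ j)
  have habs : ∀ f : Fin k → Fin d,
      |A (fun x : {x // x ∈ S} => f x.1) * B (fun x : {x // x ∈ T} => f x.1)|
      = |A (fun x => f x.1)| * |B (fun x => f x.1)| := fun f => abs_mul _ _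
  simp only [habs]
  have hmem : i ∈ S ∨ i ∈ T := by
    have : i ∈ S ∪ T := hST ▸ mem_univ i
    simpa [mem_union] using this
  rcases hmem with hiS | hiT
  · exact main_case k d S T hST A B KA KB hA hB a haS haT i hiS j hKB0
  · have := main_case k d T S (by rw [Finset.union_comm]; exact hST) B A KB KA
      hB hA a haT haS i hiT j hKA0
    calc ∑ f ∈ univ.filter (fun f : Fin k → Fin d => f i = j),
          |A (fun x => f x.1)| * |B (fun x => f x.1)|
        = ∑ f ∈ univ.filter (fun f : Fin k → Fin d => f i = j),
          |B (fun x => f x.1)| * |A (fun x => f x.1)| := by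
          exact Finset.sum_congr rfl fun f _ => mul_comm _ _
      _ ≤ KB * KA := this
      _ = KA * KB := mul_comm _ _
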